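/- Let C be a real symmetric n×n matrix, ρ ∈ ℝⁿ with ρ_i = Σ_j |C_ij| > 0, X an n×n positive semidefinite matrix, S the diagonal matrix with S_ii = min(1/√ρ_i, 1/√X_ii), X̂ = S X S, and Ĉ = D C D where D = diag(1/√ρ). Then Ĉ • X − Σ_{i=1}^n (X_ii − ρ_i)⁺ ≤ C • X̂, where A • B = Tr(AᵀB) and t⁺ = max(t, 0). -/

import Mathlib

open Matrix

/-- The Frobenius (trace) inner product of two square real matrices. -/
noncomputable def matDot {n : ℕ} (A B : Matrix (Fin n) (Fin n) ℝ) : ℝ :=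
  (Aᵀ * B).trace

lemma psd_diag {n : ℕ} {X : Matrix (Fin n) (Fin n) ℝ} (hX : X.PosSemidef)
    (i : Fin n) : 0 ≤ X i i := by
  have h := hX.dotProduct_mulVec_nonneg (Pi.single i (1:ℝ))
  simpa [Matrix.mulVec_single, single_dotProduct] using h

lemma psd_entry {n : ℕ} {X : Matrix (Fin n) (Fin n) ℝ} (hX : X.PosSemidef)
    (i j : Fin n) : (X i j)^2 ≤ X i i * X j j := by
  have hsym : X j i = X i j := by
    have := hX.1; rw [Matrix.IsHermitian] at this
    have := congrFun (congrFun this i) j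
    simpa [Matrix.transpose_apply] using this
  have hq : ∀ t : ℝ, 0 ≤ X i i * t^2 + 2 * X i j * t + X j j := by
    intro t
    have h := hX.dotProduct_mulVec_nonneg (t • (Pi.single i 1 : Fin n → ℝ) + (Pi.single j 1 : Fin n → ℝ))
    simp only [Matrix.mulVec_add, Matrix.mulVec_smul, Matrix.mulVec_single,
      dotProduct_add, add_dotProduct, smul_dotProduct,
      dotProduct_smul, single_dotProduct, star_trivial,
      Pi.add_apply, Pi.smul_apply, smul_eq_mul, mul_one, Matrix.col_apply,
      MulOpposite.smul_eq_mul_unop, MulOpposite.unop_op, one_mul] at h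
    rw [hsym] at h; nlinarith [h]
  have hii : 0 ≤ X i i := psd_diag hX i
  by_cases h0 : X i i = 0
  · by_contra hcon
    push_neg at hcon
    have hij : X i j ≠ 0 := by
      intro h; rw [h] at hcon; simp at hcon
      have := hq 0; simp at this; nlinarith
    have := hq (-(X j j + 1) / (2 * X i j))
    rw [h0] at this
    have e : 2 * X i j * (-(X j j + 1) / (2 * X i j)) = -(X j j + 1) := by field_simp
    rw [e] at this
    nlinarith [sq_nonneg (X i j)]
  · have hpos : 0 < X i i := lt_of_le_of_ne hii (Ne.symm h0)
    have := hq (-(X i j) / X i i)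
    have h2 : X i i * (-(X i j) / X i i) = -(X i j) := by field_simp [mul_comm]
    have h3 : X i i * (-(X i j) / X i i)^2 = (X i j)^2 / X i i := by
      field_simp
    nlinarith [this, div_nonneg (sq_nonneg (X i j)) hii,
      mul_pos hpos hpos, sq_nonneg (X i j)]

lemma key_ineq (a c : ℝ) (ha : 0 ≤ a) (hc : 0 ≤ c) :
    a * c - min a 1 * min c 1 ≤ (max (a^2 - 1) 0 + max (c^2 - 1) 0) / 2 := by
  rcases le_or_gt a 1 with h1 | h1 <;> rcases le_or_gt c 1 with h2 | h2
  · rw [min_eq_left h1, min_eq_left h2]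
    have := le_max_right (a^2 - 1) 0
    have := le_max_right (c^2 - 1) 0
    linarith
  · rw [min_eq_left h1, min_eq_right h2.le]
    have := le_max_right (a^2 - 1) 0
    have := le_max_left (c^2 - 1) 0
    nlinarith
  · rw [min_eq_right h1.le, min_eq_left h2]
    have := le_max_left (a^2 - 1) 0
    have := le_max_right (c^2 - 1) 0
    nlinarith
  · rw [min_eq_right h1.le, min_eq_right h2.le]
    have := le_max_left (a^2 - 1) 0
    have := le_max_left (c^2 - 1) 0
    nlinarith [sq_nonneg (a - c)]

lemma matDot_eq {n : ℕ} (A B : Matrix (Fin n) (Fin n) ℝ) :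
    matDot A B = ∑ i, ∑ j, A i j * B i j := by
  unfold matDot
  simp only [Matrix.trace, Matrix.diag, Matrix.mul_apply, Matrix.transpose_apply]
  rw [Finset.sum_comm]

theorem stmt_9 {n : ℕ} (C X : Matrix (Fin n) (Fin n) ℝ)
    (hC : C.IsSymm)
    (ρ : Fin n → ℝ) (hρ : ∀ i, ρ i = ∑ j, |C i j|) (hρpos : ∀ i, 0 < ρ i)
    (hX : X.PosSemidef)
    (S : Matrix (Fin n) (Fin n) ℝ)
    (hS : S = Matrix.diagonal fun i =>
      if X i i = 0 then 1 / Real.sqrt (ρ i)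
      else min (1 / Real.sqrt (ρ i)) (1 / Real.sqrt (X i i)))
    (Chat : Matrix (Fin n) (Fin n) ℝ)
    (hChat : Chat = Matrix.diagonal (fun i => 1 / Real.sqrt (ρ i)) * C *
      Matrix.diagonal (fun i => 1 / Real.sqrt (ρ i))) :
    matDot Chat X - ∑ i, max (X i i - ρ i) 0 ≤ matDot C (S * X * S) := by
  set d : Fin n → ℝ := fun i => 1 / Real.sqrt (ρ i) with hd
  set s : Fin n → ℝ := fun i =>
      if X i i = 0 then 1 / Real.sqrt (ρ i)
      else min (1 / Real.sqrt (ρ i)) (1 / Real.sqrt (X i i)) with hsdef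
  have hXnn : ∀ i, 0 ≤ X i i := psd_diag hX
  have hsqρ : ∀ i, 0 < Real.sqrt (ρ i) := fun i => Real.sqrt_pos.2 (hρpos i)
  have hdpos : ∀ i, 0 < d i := fun i => div_pos one_pos (hsqρ i)
  have hs_nonneg : ∀ i, 0 ≤ s i := by
    intro i; simp only [hsdef]
    split
    · positivity
    · exact le_min (by positivity) (by positivity)
  have hs_le : ∀ i, s i ≤ d i := by
    intro i; simp only [hsdef, hd]
    split
    · exact le_rfl
    · exact min_le_left _ _
  -- b i = √(X i i) * s i = min (√(X i i) * d i) 1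
  have hb : ∀ i, Real.sqrt (X i i) * s i = min (Real.sqrt (X i i) * d i) 1 := by
    intro i
    simp only [hsdef, hd]
    by_cases h0 : X i i = 0
    · simp [h0, Real.sqrt_zero]
    · rw [if_neg h0]
      have hXpos : 0 < X i i := lt_of_le_of_ne (hXnn i) (Ne.symm h0)
      have hsq : 0 < Real.sqrt (X i i) := Real.sqrt_pos.2 hXpos
      rw [mul_min_of_nonneg _ _ hsq.le]
      congr 1
      field_simp
  -- a i squared
  have ha2 : ∀ i, (Real.sqrt (X i i) * d i)^2 = X i i / ρ i := by
    intro i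
    simp only [hd]
    rw [mul_pow, Real.sq_sqrt (hXnn i)]
    rw [div_pow, one_pow, Real.sq_sqrt (hρpos i).le]
    ring
  set t : Fin n → ℝ := fun i => max (X i i - ρ i) 0 / ρ i with ht
  have hmax : ∀ i, max ((Real.sqrt (X i i) * d i)^2 - 1) 0 = t i := by
    intro i
    rw [ha2 i]
    have hne : ρ i ≠ 0 := (hρpos i).ne'
    have : X i i / ρ i - 1 = (X i i - ρ i) / ρ i := by
      rw [sub_div, div_self hne]
    rw [this, ht]
    have h := max_div_div_right (hρpos i).le (X i i - ρ i) 0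
    rw [zero_div] at h
    exact h
  -- per-pair bound
  have hpair : ∀ i j, d i * C i j * d j * X i j - C i j * (s i * X i j * s j)
      ≤ |C i j| * ((t i + t j) / 2) := by
    intro i j
    have hΔ : 0 ≤ d i * d j - s i * s j := by
      have := mul_le_mul (hs_le i) (hs_le j) (hs_nonneg j) (hdpos i).le
      linarith
    have hXij : |X i j| ≤ Real.sqrt (X i i) * Real.sqrt (X j j) := by
      have := psd_entry hX i j
      have h1 : |X i j| = Real.sqrt ((X i j)^2) := (Real.sqrt_sq_eq_abs _).symm
      rw [h1, ← Real.sqrt_mul (hXnn i)]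
      exact Real.sqrt_le_sqrt this
    have step1 : d i * C i j * d j * X i j - C i j * (s i * X i j * s j)
        = (C i j * X i j) * (d i * d j - s i * s j) := by ring
    have step2 : (C i j * X i j) * (d i * d j - s i * s j)
        ≤ (|C i j| * |X i j|) * (d i * d j - s i * s j) := by
      apply mul_le_mul_of_nonneg_right _ hΔ
      calc C i j * X i j ≤ |C i j * X i j| := le_abs_self _
        _ = |C i j| * |X i j| := abs_mul _ _
    have step3 : (|C i j| * |X i j|) * (d i * d j - s i * s j)
        ≤ (|C i j| * (Real.sqrt (X i i) * Real.sqrt (X j j))) * (d i * d j - s i * s j) := by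
      apply mul_le_mul_of_nonneg_right _ hΔ
      exact mul_le_mul_of_nonneg_left hXij (abs_nonneg _)
    have step4 : (|C i j| * (Real.sqrt (X i i) * Real.sqrt (X j j))) * (d i * d j - s i * s j)
        ≤ |C i j| * ((t i + t j) / 2) := by
      have hkey := key_ineq (Real.sqrt (X i i) * d i) (Real.sqrt (X j j) * d j)
        (by positivity) (by positivity)
      rw [← hb i, ← hb j, hmax i, hmax j] at hkey
      have : (Real.sqrt (X i i) * Real.sqrt (X j j)) * (d i * d j - s i * s j)
          = (Real.sqrt (X i i) * d i) * (Real.sqrt (X j j) * d j)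
            - (Real.sqrt (X i i) * s i) * (Real.sqrt (X j j) * s j) := by ring
      calc (|C i j| * (Real.sqrt (X i i) * Real.sqrt (X j j))) * (d i * d j - s i * s j)
          = |C i j| * ((Real.sqrt (X i i) * Real.sqrt (X j j)) * (d i * d j - s i * s j)) := by
            ring
        _ ≤ |C i j| * ((t i + t j) / 2) := by
            apply mul_le_mul_of_nonneg_left _ (abs_nonneg _)
            rw [this]
            linarith [hkey]
    linarith [step1 ▸ le_trans step2 (le_trans step3 step4)]
  -- rewrite matDots
  have h1 : matDot Chat X = ∑ i, ∑ j, d i * C i j * d j * X i j := by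
    rw [matDot_eq]
    apply Finset.sum_congr rfl; intro i _
    apply Finset.sum_congr rfl; intro j _
    rw [hChat]
    rw [Matrix.mul_diagonal, Matrix.diagonal_mul]
  have h2 : matDot C (S * X * S) = ∑ i, ∑ j, C i j * (s i * X i j * s j) := by
    rw [matDot_eq]
    apply Finset.sum_congr rfl; intro i _
    apply Finset.sum_congr rfl; intro j _
    rw [hS]
    rw [Matrix.mul_diagonal, Matrix.diagonal_mul]
  -- sum the bound
  have habs_sym : ∀ i j, |C i j| = |C j i| := by
    intro i j
    have := congrFun (congrFun hC j) i
    simp only [Matrix.transpose_apply] at this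
    rw [this]
  have hsum : ∑ i, ∑ j, |C i j| * ((t i + t j) / 2) = ∑ i, max (X i i - ρ i) 0 := by
    have expand : ∀ i j : Fin n, |C i j| * ((t i + t j) / 2)
        = |C i j| * t i / 2 + |C i j| * t j / 2 := by intro i j; ring
    simp_rw [expand, Finset.sum_add_distrib]
    have hA : ∑ i, ∑ j, |C i j| * t i / 2 = ∑ i, ρ i * t i / 2 := by
      apply Finset.sum_congr rfl; intro i _
      rw [← Finset.sum_div, ← Finset.sum_mul, ← hρ i]
    have hB : ∑ i, ∑ j, |C i j| * t j / 2 = ∑ i, ρ i * t i / 2 := by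
      rw [Finset.sum_comm]
      apply Finset.sum_congr rfl; intro j _
      rw [← Finset.sum_div, ← Finset.sum_mul]
      have hcs : ∑ i, |C i j| = ρ j := by
        rw [hρ j]
        exact Finset.sum_congr rfl (fun i _ => habs_sym i j)
      rw [hcs]
    rw [hA, hB]
    rw [← Finset.sum_add_distrib]
    apply Finset.sum_congr rfl; intro i _
    have hne : ρ i ≠ 0 := (hρpos i).ne'
    have hcan : ρ i * (max (X i i - ρ i) 0 / ρ i) = max (X i i - ρ i) 0 := by
      field_simp
    simp only [ht]
    linarith [hcan]
  rw [h1, h2, sub_le_iff_le_add, ← hsum]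
  rw [← Finset.sum_add_distrib]
  apply Finset.sum_le_sum; intro i _
  rw [← Finset.sum_add_distrib]
  apply Finset.sum_le_sum; intro j _
  linarith [hpair i j]
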